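/- Let G be a (P_5, HVN)-free graph containing an induced Y-5-wheel Σ (with 5-cycle v_1 v_2 v_3 v_4 v_5 and extra vertex x adjacent to v_1, v_2, v_4) but no induced T-5-wheel. Define R_i = {u ∈ V(G) : N_Σ(u) = {v_{i-1}, v_{i+1}}} (indices mod 5). If R_1 is nonempty, then R_2 is empty; moreover R_1 is anticomplete to R_3 and R_2 is anticomplete to R_5. -/

import Mathlib

open SimpleGraph

/-- The paw: a triangle 0,1,2 plus vertex 3 adjacent only to 0. -/
def pawGraph : SimpleGraph (Fin 4) :=
  SimpleGraph.fromEdgeSet {s(0,1), s(0,2), s(1,2), s(0,3)}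

/-- The HVN: a K₄ on 0,1,2,3 plus vertex 4 adjacent to exactly 0 and 1. -/
def hvnGraph : SimpleGraph (Fin 5) :=
  SimpleGraph.fromEdgeSet {s(0,1), s(0,2), s(0,3), s(1,2), s(1,3), s(2,3), s(4,0), s(4,1)}

/-- The T-5-wheel: 5-cycle 0-1-2-3-4-0 plus vertex 5 adjacent to the three consecutive
vertices 4, 0, 1. -/
def t5WheelGraph : SimpleGraph (Fin 6) :=
  SimpleGraph.fromEdgeSet {s(0,1), s(1,2), s(2,3), s(3,4), s(4,0), s(5,4), s(5,0), s(5,1)}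

/-- The Y-5-wheel: 5-cycle 0-1-2-3-4-0 plus vertex 5 adjacent to 0, 1, 3
(three non-consecutive vertices). -/
def y5WheelGraph : SimpleGraph (Fin 6) :=
  SimpleGraph.fromEdgeSet {s(0,1), s(1,2), s(2,3), s(3,4), s(4,0), s(5,0), s(5,1), s(5,3)}

/-- `G` contains an induced copy of `H`: an injection preserving and reflecting adjacency. -/
def ContainsInduced {V W : Type*} (G : SimpleGraph V) (H : SimpleGraph W) : Prop :=
  ∃ f : W ↪ V, ∀ a b : W, H.Adj a b ↔ G.Adj (f a) (f b)

/-- `G` is `H`-free: no induced copy of `H`. -/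
def InducedFree {V W : Type*} (G : SimpleGraph V) (H : SimpleGraph W) : Prop :=
  ¬ ContainsInduced G H

/-- `v` lists the vertices of an induced (chordless) 5-cycle of `G`, in order. -/
def IsInducedC5 {V : Type*} (G : SimpleGraph V) (v : ZMod 5 → V) : Prop :=
  Function.Injective v ∧ ∀ i j : ZMod 5, G.Adj (v i) (v j) ↔ (j = i + 1 ∨ j = i - 1)

/-- `v`, `x` form an induced Y-5-wheel: `v` is an induced 5-cycle and the extra vertex `x`
is adjacent to exactly `v 0`, `v 1`, `v 3` (the pattern v₁, v₂, v₄). -/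
def IsInducedY5Wheel {V : Type*} (G : SimpleGraph V) (v : ZMod 5 → V) (x : V) : Prop :=
  IsInducedC5 G v ∧ (∀ i, x ≠ v i) ∧
    ∀ i : ZMod 5, G.Adj x (v i) ↔ (i = 0 ∨ i = 1 ∨ i = 3)

/-- The neighbourhood of `u` on the wheel `Σ` with cycle vertices `v i` and hub `x`. -/
def wheelNbhd {V : Type*} (G : SimpleGraph V) (v : ZMod 5 → V) (x : V) (u : V) : Set V :=
  {w | (w = x ∨ ∃ i, w = v i) ∧ G.Adj u w}

/-- If `G` has five vertices forming an induced path, it contains an induced `P₅`. -/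
lemma containsP5_of {V : Type*} {G : SimpleGraph V} {a b c d e : V}
    (hab : G.Adj a b) (hbc : G.Adj b c) (hcd : G.Adj c d) (hde : G.Adj d e)
    (hac : ¬ G.Adj a c) (had : ¬ G.Adj a d) (hae : ¬ G.Adj a e)
    (hbd : ¬ G.Adj b d) (hbe : ¬ G.Adj b e) (hce : ¬ G.Adj c e) :
    ContainsInduced G (pathGraph 5) := by
  have hac' : ¬ G.Adj c a := fun h => hac h.symm
  have had' : ¬ G.Adj d a := fun h => had h.symm
  have hae' : ¬ G.Adj e a := fun h => hae h.symm
  have hbd' : ¬ G.Adj d b := fun h => hbd h.symm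
  have hbe' : ¬ G.Adj e b := fun h => hbe h.symm
  have hce' : ¬ G.Adj e c := fun h => hce h.symm
  have nab := hab.ne
  have nbc := hbc.ne
  have ncd := hcd.ne
  have nde := hde.ne
  have nac : a ≠ c := fun h => had (h ▸ hcd)
  have nad : a ≠ d := fun h => hae (h ▸ hde)
  have nae : a ≠ e := fun h => hbe (h ▸ hab).symm
  have nbd : b ≠ d := fun h => had (h ▸ hab)
  have nbe : b ≠ e := fun h => hce (h ▸ hbc).symm
  have nce : c ≠ e := fun h => hbe (h ▸ hbc)
  refine ⟨⟨![a,b,c,d,e], ?_⟩, ?_⟩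
  · intro i j hij
    fin_cases i <;> fin_cases j <;>
      simp_all (config := { decide := true }) [Matrix.cons_val_zero, Matrix.cons_val_one,
        Matrix.head_cons, Matrix.cons_val_succ]
  · intro i j
    change _ ↔ G.Adj (![a,b,c,d,e] i) (![a,b,c,d,e] j)
    fin_cases i <;> fin_cases j <;>
      simp (config := { decide := true }) [pathGraph_adj, Matrix.cons_val_zero,
        Matrix.cons_val_one, Matrix.head_cons, Matrix.cons_val_succ,
        hab, hbc, hcd, hde, hab.symm, hbc.symm, hcd.symm, hde.symm,
        hac, had, hae, hbd, hbe, hce, hac', had', hae', hbd', hbe', hce', G.irrefl]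

/-- Unpacking membership in the set `R i`. -/
lemma wheelNbhd_eq_pair {V : Type*} {G : SimpleGraph V} {v : ZMod 5 → V} {x : V}
    (hc5 : IsInducedC5 G v) (hx : ∀ i, x ≠ v i) {u : V} {i : ZMod 5}
    (h : wheelNbhd G v x u = {v (i - 1), v (i + 1)}) :
    (∀ j : ZMod 5, G.Adj u (v j) ↔ (j = i - 1 ∨ j = i + 1)) ∧ ¬ G.Adj u x := by
  constructor
  · intro j
    have h1 := Set.ext_iff.mp h (v j)
    simp only [wheelNbhd, Set.mem_setOf_eq, Set.mem_insert_iff, Set.mem_singleton_iff] at h1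
    constructor
    · intro hadj
      rcases h1.mp ⟨Or.inr ⟨j, rfl⟩, hadj⟩ with h2 | h2
      · exact Or.inl (hc5.1 h2)
      · exact Or.inr (hc5.1 h2)
    · intro hj
      have hm : v j = v (i - 1) ∨ v j = v (i + 1) := by
        rcases hj with h | h
        · exact Or.inl (by rw [h])
        · exact Or.inr (by rw [h])
      exact (h1.mpr hm).2
  · intro hadj
    have hmw : x ∈ wheelNbhd G v x u := ⟨Or.inl rfl, hadj⟩
    rw [h] at hmw
    simp only [Set.mem_insert_iff, Set.mem_singleton_iff] at hmw
    rcases hmw with h2 | h2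
    · exact hx _ h2
    · exact hx _ h2

/-- In a (P₅, HVN, T-5-wheel)-free graph with an induced Y-5-wheel: if `R 0` (the paper's
`R₁`) is nonempty then `R 1` (the paper's `R₂`) is empty; moreover `R 0` is anticomplete
to `R 2` and `R 1` is anticomplete to `R 4`. -/
theorem y5wheel_r_properties {V : Type*} (G : SimpleGraph V)
    (hP5 : InducedFree G (pathGraph 5)) (hHVN : InducedFree G hvnGraph)
    (hT5 : InducedFree G t5WheelGraph)
    (v : ZMod 5 → V) (x : V) (hW : IsInducedY5Wheel G v x)
    (R : ZMod 5 → Set V)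
    (hR : ∀ i, R i = {u : V | wheelNbhd G v x u = {v (i - 1), v (i + 1)}}) :
    ((R 0).Nonempty → R 1 = ∅) ∧
    (∀ a ∈ R 0, ∀ b ∈ R 2, ¬ G.Adj a b) ∧
    (∀ a ∈ R 1, ∀ b ∈ R 4, ¬ G.Adj a b) := by
  obtain ⟨hc5, hx, hxadj⟩ := hW
  have hcyc := hc5.2
  -- cycle edges / non-edges we will need
  have e34 : G.Adj (v 3) (v 4) := (hcyc 3 4).mpr (by decide)
  have e40 : G.Adj (v 4) (v 0) := (hcyc 4 0).mpr (by decide)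
  have e12 : G.Adj (v 1) (v 2) := (hcyc 1 2).mpr (by decide)
  have n02 : ¬ G.Adj (v 0) (v 2) := fun h => absurd ((hcyc 0 2).mp h) (by decide)
  have n24 : ¬ G.Adj (v 2) (v 4) := fun h => absurd ((hcyc 2 4).mp h) (by decide)
  -- x edges / non-edges
  have ex3 : G.Adj x (v 3) := (hxadj 3).mpr (by decide)
  have ex0 : G.Adj x (v 0) := (hxadj 0).mpr (by decide)
  have ex1 : G.Adj x (v 1) := (hxadj 1).mpr (by decide)
  have nx4 : ¬ G.Adj x (v 4) := fun h => absurd ((hxadj 4).mp h) (by decide)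
  have nx2 : ¬ G.Adj x (v 2) := fun h => absurd ((hxadj 2).mp h) (by decide)
  -- unpacking R-membership
  have memR : ∀ i : ZMod 5, ∀ u ∈ R i,
      (∀ j : ZMod 5, G.Adj u (v j) ↔ (j = i - 1 ∨ j = i + 1)) ∧ ¬ G.Adj u x := by
    intro i u hu
    rw [hR i] at hu
    exact wheelNbhd_eq_pair hc5 hx hu
  refine ⟨?_, ?_, ?_⟩
  · -- R 0 nonempty → R 1 empty
    rintro ⟨a, ha⟩
    obtain ⟨ha1, ha2⟩ := memR 0 a ha
    rw [Set.eq_empty_iff_forall_notMem]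
    intro b hb
    obtain ⟨hb1, hb2⟩ := memR 1 b hb
    have hav1 : G.Adj a (v 1) := (ha1 1).mpr (by decide)
    have hav4 : G.Adj a (v 4) := (ha1 4).mpr (by decide)
    have nav0 : ¬ G.Adj a (v 0) := fun h => absurd ((ha1 0).mp h) (by decide)
    have nav2 : ¬ G.Adj a (v 2) := fun h => absurd ((ha1 2).mp h) (by decide)
    have nav3 : ¬ G.Adj a (v 3) := fun h => absurd ((ha1 3).mp h) (by decide)
    have hbv0 : G.Adj b (v 0) := (hb1 0).mpr (by decide)
    have hbv2 : G.Adj b (v 2) := (hb1 2).mpr (by decide)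
    have nbv3 : ¬ G.Adj b (v 3) := fun h => absurd ((hb1 3).mp h) (by decide)
    have nbv4 : ¬ G.Adj b (v 4) := fun h => absurd ((hb1 4).mp h) (by decide)
    by_cases hab : G.Adj a b
    · -- induced P5 : x - v3 - v4 - a - b
      exact hP5 (containsP5_of ex3 e34 hav4.symm hab
        nx4 (fun h => ha2 h.symm) (fun h => hb2 h.symm)
        (fun h => nav3 h.symm) (fun h => nbv3 h.symm) (fun h => nbv4 h.symm))
    · -- induced P5 : a - v4 - v0 - b - v2
      exact hP5 (containsP5_of hav4 e40 hbv0.symm hbv2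
        nav0 hab nav2 (fun h => nbv4 h.symm) (fun h => n24 h.symm) n02)
  · -- R 0 anticomplete to R 2
    intro a ha b hb hab
    obtain ⟨ha1, ha2⟩ := memR 0 a ha
    obtain ⟨hb1, hb2⟩ := memR 2 b hb
    have hav4 : G.Adj a (v 4) := (ha1 4).mpr (by decide)
    have nav0 : ¬ G.Adj a (v 0) := fun h => absurd ((ha1 0).mp h) (by decide)
    have nbv0 : ¬ G.Adj b (v 0) := fun h => absurd ((hb1 0).mp h) (by decide)
    have nbv4 : ¬ G.Adj b (v 4) := fun h => absurd ((hb1 4).mp h) (by decide)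
    -- induced P5 : x - v0 - v4 - a - b
    exact hP5 (containsP5_of ex0 e40.symm hav4.symm hab
      nx4 (fun h => ha2 h.symm) (fun h => hb2 h.symm)
      (fun h => nav0 h.symm) (fun h => nbv0 h.symm) (fun h => nbv4 h.symm))
  · -- R 1 anticomplete to R 4
    intro a ha b hb hab
    obtain ⟨ha1, ha2⟩ := memR 1 a ha
    obtain ⟨hb1, hb2⟩ := memR 4 b hb
    have hav2 : G.Adj a (v 2) := (ha1 2).mpr (by decide)
    have nav1 : ¬ G.Adj a (v 1) := fun h => absurd ((ha1 1).mp h) (by decide)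
    have nbv1 : ¬ G.Adj b (v 1) := fun h => absurd ((hb1 1).mp h) (by decide)
    have nbv2 : ¬ G.Adj b (v 2) := fun h => absurd ((hb1 2).mp h) (by decide)
    -- induced P5 : x - v1 - v2 - a - b
    exact hP5 (containsP5_of ex1 e12 hav2.symm hab
      nx2 (fun h => ha2 h.symm) (fun h => hb2 h.symm)
      (fun h => nav1 h.symm) (fun h => nbv1 h.symm) (fun h => nbv2 h.symm))
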